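/- Let U be a finite-dimensional complex vector space and let J : U → U be an antilinear map (i.e. additive with J(λu) = conj(λ)·J(u) for all λ ∈ ℂ, u ∈ U) satisfying J ∘ J = −id. If A : U → U is a complex-linear endomorphism commuting with J (A ∘ J = J ∘ A), then the complex determinant of A is real and nonnegative: (det A).im = 0 and 0 ≤ (det A).re. -/

import Mathlib

open LinearMap Submodule Module Matrix

universe u

/-- Determinant is multiplicative across an invariant submodule and its quotient. -/
private lemma det_restrict_mul_det_mapQ {U : Type u} [AddCommGroup U] [Module ℂ U]
    [FiniteDimensional ℂ U] (p : Submodule ℂ U) (f : U →ₗ[ℂ] U)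
    (h : ∀ x ∈ p, f x ∈ p) :
    LinearMap.det f =
      LinearMap.det (f.restrict h) * LinearMap.det (p.mapQ p f h) := by
  classical
  obtain ⟨q, hq⟩ := Submodule.exists_isCompl p
  let bp := Module.Free.chooseBasis ℂ p
  let bq := Module.Free.chooseBasis ℂ q
  let e := Submodule.prodEquivOfIsCompl p q hq
  let b := (bp.prod bq).map e
  let bQ := bq.map (Submodule.quotientEquivOfIsCompl p q hq).symm
  have hb_inl : ∀ i, b (Sum.inl i) = (bp i : U) := by
    intro i
    simp [b, e, Basis.map_apply, Basis.prod_apply,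
      Submodule.coe_prodEquivOfIsCompl']
  have hb_inr : ∀ k, b (Sum.inr k) = (bq k : U) := by
    intro k
    simp [b, e, Basis.map_apply, Basis.prod_apply,
      Submodule.coe_prodEquivOfIsCompl']
  have hrepr_mem : ∀ (x : U) (hx : x ∈ p),
      (∀ i, b.repr x (Sum.inl i) = bp.repr ⟨x, hx⟩ i) ∧
      (∀ k, b.repr x (Sum.inr k) = 0) := by
    intro x hx
    have hsymm : e.symm x = ((⟨x, hx⟩ : p), 0) :=
      Submodule.prodEquivOfIsCompl_symm_apply_left p q hq (⟨x, hx⟩ : p)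
    constructor
    · intro i
      simp [b, Basis.map_repr, hsymm, Basis.prod_repr_inl]
    · intro k
      simp [b, Basis.map_repr, hsymm, Basis.prod_repr_inr]
  have hquot : ∀ y : U,
      Submodule.quotientEquivOfIsCompl p q hq (Submodule.Quotient.mk y)
        = (e.symm y).2 := by
    intro y
    have hy : ((e.symm y).1 : U) + ((e.symm y).2 : U) = y := by
      rw [← Submodule.coe_prodEquivOfIsCompl' p q hq]
      exact e.apply_symm_apply y
    have : (Submodule.Quotient.mk y : U ⧸ p)
        = Submodule.Quotient.mk ((e.symm y).2 : U) := by
      rw [Submodule.Quotient.eq]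
      rw [show y - ((e.symm y).2 : U) = ((e.symm y).1 : U) from sub_eq_iff_eq_add.mpr hy.symm]
      exact ((e.symm y).1).2
    rw [this, Submodule.quotientEquivOfIsCompl_apply_mk_coe]
  have key : (LinearMap.toMatrix b b f) =
      Matrix.fromBlocks (LinearMap.toMatrix bp bp (f.restrict h))
        ((LinearMap.toMatrix b b f).toBlocks₁₂) 0
        (LinearMap.toMatrix bQ bQ (p.mapQ p f h)) := by
    ext i j
    rcases i with i | i <;> rcases j with j | j
    · have hmem : f (b (Sum.inl j)) ∈ p := by rw [hb_inl]; exact h _ (bp j).2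
      rw [LinearMap.toMatrix_apply]
      have := (hrepr_mem _ hmem).1 i
      rw [this]
      simp [Matrix.fromBlocks, LinearMap.toMatrix_apply, LinearMap.restrict_apply]
      congr 1
      ext
      simp [hb_inl]
    · simp [Matrix.fromBlocks, Matrix.toBlocks₁₂, LinearMap.toMatrix_apply]
    · have hmem : f (b (Sum.inl j)) ∈ p := by rw [hb_inl]; exact h _ (bp j).2
      rw [LinearMap.toMatrix_apply]
      have := (hrepr_mem _ hmem).2 i
      rw [this]
      simp [Matrix.fromBlocks]
    · rw [LinearMap.toMatrix_apply]
      simp only [Matrix.fromBlocks, Matrix.of_apply, Sum.elim_inr]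
      rw [LinearMap.toMatrix_apply]
      have hbQ : bQ j = Submodule.Quotient.mk (bq j : U) := by
        simp [bQ, Basis.map_apply, Submodule.quotientEquivOfIsCompl_symm_apply]
      rw [hbQ, Submodule.mapQ_apply]
      have : (bQ.repr (Submodule.Quotient.mk (f (bq j : U)))) i
          = bq.repr ((e.symm (f (bq j : U))).2) i := by
        simp [bQ, Basis.map_repr, hquot]
      rw [this]
      rw [hb_inr]
      have : b.repr (f (bq j : U)) (Sum.inr i)
          = bq.repr ((e.symm (f (bq j : U))).2) i := by
        simp [b, Basis.map_repr, Basis.prod_repr_inr]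
      rw [this]
  rw [← LinearMap.det_toMatrix b, key, Matrix.det_fromBlocks_zero₂₁,
    LinearMap.det_toMatrix, LinearMap.det_toMatrix]

private lemma quaternionic_aux (n : ℕ) :
    ∀ (U : Type u) [AddCommGroup U] [Module ℂ U] [FiniteDimensional ℂ U]
      (J : U →ₛₗ[starRingEnd ℂ] U), (∀ u, J (J u) = -u) →
      ∀ (A : U →ₗ[ℂ] U), (∀ u, A (J u) = J (A u)) →
      Module.finrank ℂ U = n →
      (LinearMap.det A).im = 0 ∧ 0 ≤ (LinearMap.det A).re := by
  induction n using Nat.strong_induction_on with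
  | _ n IH =>
    intro U _ _ _ J hJ A hA hdim
    rcases Nat.eq_zero_or_pos n with hn | hn
    · subst hn
      have : Subsingleton U := by
        rw [← Module.finrank_zero_iff (R := ℂ)]; exact hdim
      have hA1 : A = LinearMap.id := Subsingleton.elim _ _
      rw [hA1, LinearMap.det_id]
      norm_num
    · have : 0 < Module.finrank ℂ U := hdim ▸ hn
      have : Nontrivial U := Module.nontrivial_of_finrank_pos this
      obtain ⟨μ, hμ⟩ := Module.End.exists_eigenvalue (A : Module.End ℂ U)
      obtain ⟨v, hv⟩ := hμ.exists_hasEigenvector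
      have hAv : A v = μ • v := hv.apply_eq_smul
      have hv0 : v ≠ 0 := hv.right
      -- the 2-dimensional invariant subspace spanned by v and J v
      set W : Submodule ℂ U := Submodule.span ℂ (Set.range ![v, J v]) with hW
      have hvW : v ∈ W := Submodule.subset_span ⟨0, rfl⟩
      have hJvW : J v ∈ W := Submodule.subset_span ⟨1, rfl⟩
      have hAJv : A (J v) = (starRingEnd ℂ μ) • (J v) := by
        rw [hA, hAv, LinearMap.map_smulₛₗ]
      have hWA : ∀ x ∈ W, A x ∈ W := by
        intro x hx
        have : W ≤ W.comap A := by
          rw [hW, Submodule.span_le]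
          rintro _ ⟨i, rfl⟩
          fin_cases i
          · show A v ∈ W
            rw [hAv]; exact W.smul_mem μ hvW
          · show A (J v) ∈ W
            rw [hAJv]; exact W.smul_mem _ hJvW
        exact this hx
      have hWJ : ∀ x ∈ W, J x ∈ W := by
        intro x hx
        have : W ≤ W.comap J := by
          rw [hW, Submodule.span_le]
          rintro _ ⟨i, rfl⟩
          fin_cases i
          · show J v ∈ W
            exact hJvW
          · show J (J v) ∈ W
            rw [hJ]; exact W.neg_mem hvW
        exact this hx
      -- v and J v are linearly independent
      have hJv0 : J v ≠ 0 := by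
        intro h0
        apply hv0
        have := hJ v
        rw [h0, map_zero] at this
        exact neg_eq_zero.mp this.symm
      have hli : LinearIndependent ℂ ![v, J v] := by
        rw [LinearIndependent.pair_iff]
        intro s t hst
        have h2 : (starRingEnd ℂ s) • J v - (starRingEnd ℂ t) • v = 0 := by
          have := congrArg J hst
          rw [map_add, map_zero, LinearMap.map_smulₛₗ, LinearMap.map_smulₛₗ, hJ] at this
          rw [← this]
          module
        have e1 : s • v = -(t • J v) := eq_neg_of_add_eq_zero_left hst
        have e2 : (starRingEnd ℂ t) • v = (starRingEnd ℂ s) • J v := by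
          rw [sub_eq_zero] at h2; exact h2.symm
        have key : (s * starRingEnd ℂ s + t * starRingEnd ℂ t) • J v = 0 := by
          have c1 : (s * starRingEnd ℂ t) • v = -((t * starRingEnd ℂ t) • J v) := by
            calc (s * starRingEnd ℂ t) • v = starRingEnd ℂ t • (s • v) := by
                  rw [smul_smul, mul_comm]
              _ = starRingEnd ℂ t • (-(t • J v)) := by rw [e1]
              _ = -((t * starRingEnd ℂ t) • J v) := by
                  rw [smul_neg, smul_smul, mul_comm]
          have c2 : (s * starRingEnd ℂ t) • v = (s * starRingEnd ℂ s) • J v := by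
            rw [← smul_smul, e2, smul_smul]
          rw [add_smul, ← c2, c1, neg_add_cancel]
        have hst0 : s * starRingEnd ℂ s + t * starRingEnd ℂ t = 0 :=
          (smul_eq_zero.mp key).resolve_right hJv0
        have : Complex.normSq s + Complex.normSq t = 0 := by
          have := congrArg Complex.re hst0
          simpa [Complex.mul_conj] using this
        constructor
        · have := (add_eq_zero_iff_of_nonneg (Complex.normSq_nonneg s) (Complex.normSq_nonneg t)).mp this
          exact Complex.normSq_eq_zero.mp this.1
        · have := (add_eq_zero_iff_of_nonneg (Complex.normSq_nonneg s) (Complex.normSq_nonneg t)).mp this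
          exact Complex.normSq_eq_zero.mp this.2
      -- basis of W
      let b2 : Basis (Fin 2) ℂ W := Basis.span hli
      have hb2 : ∀ i, (b2 i : U) = ![v, J v] i := fun i => congrArg Subtype.val (Basis.span_apply hli i)
      have hfW : Module.finrank ℂ W = 2 := by
        rw [finrank_eq_card_basis b2, Fintype.card_fin]
      -- determinant of the restriction
      have hr0 : A.restrict hWA (b2 0) = μ • b2 0 := by
        apply Subtype.ext
        rw [LinearMap.restrict_coe_apply, SetLike.val_smul, hb2 0]
        show A v = μ • v
        exact hAv
      have hr1 : A.restrict hWA (b2 1) = (starRingEnd ℂ μ) • b2 1 := by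
        apply Subtype.ext
        rw [LinearMap.restrict_coe_apply, SetLike.val_smul, hb2 1]
        show A (J v) = starRingEnd ℂ μ • J v
        exact hAJv
      have hdet_r : LinearMap.det (A.restrict hWA) = μ * starRingEnd ℂ μ := by
        rw [← LinearMap.det_toMatrix b2]
        have : LinearMap.toMatrix b2 b2 (A.restrict hWA) =
            !![μ, 0; 0, starRingEnd ℂ μ] := by
          ext i j
          fin_cases i <;> fin_cases j <;>
            simp [LinearMap.toMatrix_apply, hr0, hr1, Basis.repr_self,
              Finsupp.single_apply]
        rw [this, Matrix.det_fin_two_of]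
        ring
      -- quotient structures
      have hWA' : W ≤ W.comap A := fun x hx => hWA x hx
      have hWJ' : W ≤ W.comap J := fun x hx => hWJ x hx
      let Aq : (U ⧸ W) →ₗ[ℂ] (U ⧸ W) := W.mapQ W A hWA'
      let Jq : (U ⧸ W) →ₛₗ[starRingEnd ℂ] (U ⧸ W) := W.mapQ W J hWJ'
      have hJq : ∀ z, Jq (Jq z) = -z := by
        intro z
        obtain ⟨x, rfl⟩ := Submodule.Quotient.mk_surjective W z
        simp [Jq, Submodule.mapQ_apply, hJ]
      have hAq : ∀ z, Aq (Jq z) = Jq (Aq z) := by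
        intro z
        obtain ⟨x, rfl⟩ := Submodule.Quotient.mk_surjective W z
        simp [Aq, Jq, Submodule.mapQ_apply, hA]
      have hdimq : Module.finrank ℂ (U ⧸ W) = n - 2 := by
        have := Submodule.finrank_quotient_add_finrank W
        omega
      have hlt : n - 2 < n := by omega
      obtain ⟨him, hre⟩ := IH (n - 2) hlt (U ⧸ W) Jq hJq Aq hAq hdimq
      -- combine
      have hsplit := det_restrict_mul_det_mapQ W A hWA
      have hdetq_real : LinearMap.det Aq = ((LinearMap.det Aq).re : ℂ) :=
        Complex.ext rfl (by simp [him])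
      rw [hsplit, hdet_r, Complex.mul_conj, hdetq_real, ← Complex.ofReal_mul]
      refine ⟨Complex.ofReal_im _, ?_⟩
      rw [Complex.ofReal_re]
      exact mul_nonneg (Complex.normSq_nonneg μ) hre

theorem det_real_nonneg_of_quaternionic
    (U : Type*) [AddCommGroup U] [Module ℂ U] [FiniteDimensional ℂ U]
    (J : U →ₛₗ[starRingEnd ℂ] U) (hJ : ∀ u, J (J u) = -u)
    (A : U →ₗ[ℂ] U) (hA : ∀ u, A (J u) = J (A u)) :
    (LinearMap.det A).im = 0 ∧ 0 ≤ (LinearMap.det A).re :=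
  quaternionic_aux (Module.finrank ℂ U) U J hJ A hA rfl
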